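/- Let G: ℝᵐ → ℝ^{m×m} be a continuous positive-definite matrix field along a parametric curve family, φ: [0,1] → ℝ^B continuous with φ₁,…,φ_B linearly independent. Then for every w, the quadratic form dw ↦ Σ_{i,k=1}^n Σ_{j,l=1}^B h_{ijkl}(w) dw^{ij} dw^{kl}, where h_{ijkl}(w) = ∫₀¹ φⱼ(τ) g_{ik}(q(τ;w)) φ_l(τ) dτ, is positive definite on ℝ^{n×B}. -/

import Mathlib

open Set Matrix

/-- For a continuous positive-definite metric field G and continuous,
linearly independent basis functions φ₁,…,φ_B on [0,1], the CurveGeom quadratic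
form dw ↦ Σ_{ijkl} h_{ijkl}(w) dw^{ij} dw^{kl}, with
h_{ijkl}(w) = ∫₀¹ φⱼ(τ) g_{ik}(q(τ;w)) φ_l(τ) dτ, is positive definite on ℝ^{n×B}. -/
theorem stmt_11 (n B : ℕ) (ψ : ℝ → (Fin n → ℝ)) (φ : ℝ → (Fin B → ℝ))
    (hψ : ContinuousOn ψ (Icc (0:ℝ) 1)) (hφ : ContinuousOn φ (Icc (0:ℝ) 1))
    (hli : ∀ a : Fin B → ℝ, (∀ τ ∈ Icc (0:ℝ) 1, ∑ i, a i * φ τ i = 0) → a = 0)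
    (G : (Fin n → ℝ) → Matrix (Fin n) (Fin n) ℝ)
    (hGcont : Continuous G) (hGpd : ∀ x, (G x).PosDef)
    (q : ℝ → Matrix (Fin n) (Fin B) ℝ → (Fin n → ℝ))
    (hq : ∀ τ w, q τ w = ψ τ + w.mulVec (φ τ)) :
    ∀ (w dw : Matrix (Fin n) (Fin B) ℝ), dw ≠ 0 →
      0 < ∑ i : Fin n, ∑ k : Fin n, ∑ j : Fin B, ∑ l : Fin B,
        (∫ τ in (0:ℝ)..1, φ τ j * (G (q τ w)) i k * φ τ l) * dw i j * dw k l := by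
  intro w dw hdw
  -- the velocity vector
  set v : ℝ → (Fin n → ℝ) := fun τ => dw.mulVec (φ τ) with hv
  -- the (i,k,j,l)-term of the integrand
  set g : Fin n → Fin n → Fin B → Fin B → ℝ → ℝ :=
    fun i k j l τ => (φ τ j * (G (q τ w)) i k * φ τ l) * dw i j * dw k l with hg
  -- the integrand
  set F : ℝ → ℝ := fun τ => ∑ i : Fin n, ∑ k : Fin n, ∑ j : Fin B, ∑ l : Fin B, g i k j l τ
    with hF
  -- F is the quadratic form of G at the velocity
  have hquad : ∀ τ, F τ = v τ ⬝ᵥ (G (q τ w)) *ᵥ (v τ) := by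
    intro τ
    simp only [hF, hg, hv, dotProduct, mulVec, Finset.mul_sum, Finset.sum_mul]
    refine Finset.sum_congr rfl fun i _ => Finset.sum_congr rfl fun k _ => ?_
    rw [Finset.sum_comm]
    refine Finset.sum_congr rfl fun j _ => Finset.sum_congr rfl fun l _ => ?_
    ring
  -- nonnegativity of F everywhere
  have hFnonneg : ∀ τ, 0 ≤ F τ := by
    intro τ
    rw [hquad τ]
    have := (hGpd (q τ w)).posSemidef.dotProduct_mulVec_nonneg (v τ)
    simpa using this
  -- continuity of the curve in τ on [0,1]
  have hqc : ContinuousOn (fun τ => q τ w) (Icc (0:ℝ) 1) := by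
    have : ContinuousOn (fun τ => ψ τ + w.mulVec (φ τ)) (Icc (0:ℝ) 1) := by
      apply hψ.add
      exact continuousOn_pi.2 fun i => by
        simp only [mulVec, dotProduct]
        exact continuousOn_finset_sum _ fun j _ =>
          continuousOn_const.mul ((continuous_apply j).comp_continuousOn hφ)
    simpa only [hq] using this
  -- continuity of each term on [0,1]
  have hcont : ∀ (i k : Fin n) (j l : Fin B), ContinuousOn (g i k j l) (Icc (0:ℝ) 1) := by
    intro i k j l
    have h1 : ContinuousOn (fun τ => φ τ j) (Icc (0:ℝ) 1) :=
      (continuous_apply j).comp_continuousOn hφ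
    have h2 : ContinuousOn (fun τ => (G (q τ w)) i k) (Icc (0:ℝ) 1) := by
      have hmk : Continuous (fun M : Matrix (Fin n) (Fin n) ℝ => M i k) :=
        (continuous_apply k).comp (continuous_apply i)
      exact (hmk.comp hGcont).comp_continuousOn hqc
    have h3 : ContinuousOn (fun τ => φ τ l) (Icc (0:ℝ) 1) :=
      (continuous_apply l).comp_continuousOn hφ
    exact (((h1.mul h2).mul h3).mul continuousOn_const).mul continuousOn_const
  have hIcc : uIcc (0:ℝ) 1 = Icc 0 1 := uIcc_of_le (by norm_num)
  have key : ∀ {f : ℝ → ℝ}, ContinuousOn f (Icc (0:ℝ) 1) →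
      IntervalIntegrable f MeasureTheory.volume 0 1 := by
    intro f h
    apply ContinuousOn.intervalIntegrable
    rw [hIcc]; exact h
  have hIntF : ∀ (i k : Fin n) (j l : Fin B),
      IntervalIntegrable (g i k j l) MeasureTheory.volume 0 1 :=
    fun i k j l => key (hcont i k j l)
  -- rewrite the sum of integrals as the integral of F
  have hsum : (∑ i : Fin n, ∑ k : Fin n, ∑ j : Fin B, ∑ l : Fin B,
        (∫ τ in (0:ℝ)..1, φ τ j * (G (q τ w)) i k * φ τ l) * dw i j * dw k l)
      = ∫ τ in (0:ℝ)..1, F τ := by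
    have e0 : ∀ (i k : Fin n) (j l : Fin B),
        (∫ τ in (0:ℝ)..1, φ τ j * (G (q τ w)) i k * φ τ l) * dw i j * dw k l
        = ∫ τ in (0:ℝ)..1, g i k j l τ := by
      intro i k j l
      rw [hg, ← intervalIntegral.integral_mul_const, ← intervalIntegral.integral_mul_const]
    have e1 : ∀ (i k : Fin n) (j : Fin B),
        (∑ l : Fin B, ∫ τ in (0:ℝ)..1, g i k j l τ)
        = ∫ τ in (0:ℝ)..1, ∑ l : Fin B, g i k j l τ :=
      fun i k j => (intervalIntegral.integral_finset_sum (fun l _ => hIntF i k j l)).symm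
    have e2 : ∀ (i k : Fin n),
        (∑ j : Fin B, ∫ τ in (0:ℝ)..1, ∑ l : Fin B, g i k j l τ)
        = ∫ τ in (0:ℝ)..1, ∑ j : Fin B, ∑ l : Fin B, g i k j l τ :=
      fun i k => (intervalIntegral.integral_finset_sum
        (fun j _ => key (continuousOn_finset_sum _ fun l _ => hcont i k j l))).symm
    have e3 : ∀ (i : Fin n),
        (∑ k : Fin n, ∫ τ in (0:ℝ)..1, ∑ j : Fin B, ∑ l : Fin B, g i k j l τ)
        = ∫ τ in (0:ℝ)..1, ∑ k : Fin n, ∑ j : Fin B, ∑ l : Fin B, g i k j l τ :=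
      fun i => (intervalIntegral.integral_finset_sum
        (fun k _ => key (continuousOn_finset_sum _ fun j _ =>
          continuousOn_finset_sum _ fun l _ => hcont i k j l))).symm
    have e4 :
        (∑ i : Fin n, ∫ τ in (0:ℝ)..1, ∑ k : Fin n, ∑ j : Fin B, ∑ l : Fin B, g i k j l τ)
        = ∫ τ in (0:ℝ)..1, F τ :=
      (intervalIntegral.integral_finset_sum
        (fun i _ => key (continuousOn_finset_sum _ fun k _ =>
          continuousOn_finset_sum _ fun j _ =>
            continuousOn_finset_sum _ fun l _ => hcont i k j l))).symm
    simp only [e0, e1, e2, e3, e4]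
  rw [hsum]
  -- find a point where F is positive
  obtain ⟨i0, hi0⟩ : ∃ i0 : Fin n, dw i0 ≠ 0 := by
    by_contra h
    push_neg at h
    exact hdw (by ext i j; simp [h i])
  obtain ⟨τ0, hτ0, hvτ0⟩ : ∃ τ0 ∈ Icc (0:ℝ) 1, v τ0 i0 ≠ 0 := by
    by_contra h
    push_neg at h
    apply hi0
    apply hli
    intro τ hτ
    have := h τ hτ
    simpa [hv, mulVec, dotProduct] using this
  have hvne : v τ0 ≠ 0 := fun hc => hvτ0 (by rw [hc]; rfl)
  have hFτ0 : 0 < F τ0 := by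
    rw [hquad τ0]
    have := (hGpd (q τ0 w)).dotProduct_mulVec_pos hvne
    simpa using this
  -- F is continuous on [0,1]
  have hFcont : ContinuousOn F (Icc (0:ℝ) 1) := by
    apply continuousOn_finset_sum; intro i _
    apply continuousOn_finset_sum; intro k _
    apply continuousOn_finset_sum; intro j _
    apply continuousOn_finset_sum; intro l _
    exact hcont i k j l
  have hFint : IntervalIntegrable F MeasureTheory.volume 0 1 := key hFcont
  -- positivity of the integral
  rw [intervalIntegral.integral_pos_iff_support_of_nonneg_ae
    (Filter.Eventually.of_forall hFnonneg) hFint]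
  refine ⟨by norm_num, ?_⟩
  -- F is positive on a neighborhood of τ0 within [0,1]
  have hFcw : ContinuousWithinAt F (Icc (0:ℝ) 1) τ0 := hFcont τ0 hτ0
  have hnhds : ∀ᶠ τ in nhdsWithin τ0 (Icc (0:ℝ) 1), 0 < F τ :=
    hFcw.eventually_mem (IsOpen.mem_nhds isOpen_Ioi hFτ0)
  rw [eventually_nhdsWithin_iff] at hnhds
  obtain ⟨ε, hε, hball⟩ := Metric.eventually_nhds_iff_ball.mp hnhds
  -- the interval (max 0 (τ0 - ε), min 1 (τ0 + ε)) is nonempty and in the support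
  set a : ℝ := max 0 (τ0 - ε) with ha
  set b : ℝ := min 1 (τ0 + ε) with hb
  have hab : a < b := by
    rcases hτ0 with ⟨h0, h1⟩
    rw [ha, hb]
    apply max_lt
    · apply lt_min <;> linarith
    · apply lt_min <;> linarith
  have hsub : Ioo a b ⊆ Function.support F ∩ Ioc 0 1 := by
    intro x hx
    have hx1 : x ∈ Icc (0:ℝ) 1 := ⟨le_of_lt (lt_of_le_of_lt (le_max_left _ _) hx.1),
      le_of_lt (lt_of_lt_of_le hx.2 (min_le_left _ _))⟩
    have hx2 : x ∈ Metric.ball τ0 ε := by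
      rw [Metric.mem_ball, Real.dist_eq, abs_lt]
      constructor
      · have := lt_of_le_of_lt (le_max_right _ _) hx.1; linarith
      · have := lt_of_lt_of_le hx.2 (min_le_right _ _); linarith
    refine ⟨Function.mem_support.mpr (hball x hx2 hx1).ne', ?_⟩
    exact ⟨lt_of_le_of_lt (le_max_left _ _) hx.1, hx1.2⟩
  calc (0:ENNReal) < MeasureTheory.volume (Ioo a b) := by
        rw [Real.volume_Ioo]; exact ENNReal.ofReal_pos.mpr (by linarith)
    _ ≤ _ := MeasureTheory.measure_mono hsub
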